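/- Type-AI Cartan decomposition of su(2^p) from the rank-zero quotient algebra partition: for every p ≥ 1, define the ℝ-subspaces of 2^p × 2^p complex matrices 𝔱 := span_ℝ{ i·(−i)^{ν(ζ,α)}·S^ζ_α : ζ·α = 1 in ZMod 2 } and 𝔭 := span_ℝ{ i·(−i)^{ν(ζ,α)}·S^ζ_α : ζ·α = 0 in ZMod 2 and (ζ,α) ≠ (0,0) }. Then: (1) [𝔱, 𝔱] ⊆ 𝔱; (2) [𝔱, 𝔭] ⊆ 𝔭; (3) [𝔭, 𝔭] ⊆ 𝔱; (4) for all X ∈ 𝔱 and Y ∈ 𝔭, the trace of X*Y is 0; here [A,B] := A*B − B*A. -/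

import Mathlib

open Matrix

/-- `Z₂^p`, the binary strings of length `p`. -/
abbrev Z2 (p : ℕ) : Type := Fin p → ZMod 2

/-- Inner product of two binary strings, valued in `ZMod 2`. -/
def dotp {p : ℕ} (ζ γ : Z2 p) : ZMod 2 := ∑ i, ζ i * γ i

/-- `(-1)^x` for `x : ZMod 2`, as a complex number. -/
noncomputable def sgn (x : ZMod 2) : ℂ := if x = 0 then 1 else -1

/-- The spinor `S^ζ_α`: the `2^p × 2^p` complex matrix with `(γ, β)` entry
`(-1)^{ζ·γ}` if `γ = β + α` and `0` otherwise. -/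
noncomputable def Spinor {p : ℕ} (ζ α : Z2 p) : Matrix (Z2 p) (Z2 p) ℂ :=
  Matrix.of fun γ β => if γ = β + α then sgn (dotp ζ γ) else 0

/-- `ν(ζ,α)`: the number of indices `i` with `ζ i = 1` and `α i = 1`. -/
def nu {p : ℕ} (ζ α : Z2 p) : ℕ :=
  (Finset.univ.filter fun i => ζ i = 1 ∧ α i = 1).card

/-- The subalgebra `𝔱`: real span of the skew-Hermitian spinors `i (-i)^{ν(ζ,α)} S^ζ_α`
with `ζ·α = 1`. -/
noncomputable def frakT (p : ℕ) : Submodule ℝ (Matrix (Z2 p) (Z2 p) ℂ) :=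
  Submodule.span ℝ
    {M | ∃ ζ α : Z2 p, dotp ζ α = 1 ∧
      M = Complex.I • ((-Complex.I) ^ nu ζ α • Spinor ζ α)}

/-- The subset `𝔭`: real span of the skew-Hermitian spinors `i (-i)^{ν(ζ,α)} S^ζ_α`
with `ζ·α = 0` and `(ζ,α) ≠ (0,0)`. -/
noncomputable def frakP (p : ℕ) : Submodule ℝ (Matrix (Z2 p) (Z2 p) ℂ) :=
  Submodule.span ℝ
    {M | ∃ ζ α : Z2 p, dotp ζ α = 0 ∧ (ζ, α) ≠ (0, 0) ∧
      M = Complex.I • ((-Complex.I) ^ nu ζ α • Spinor ζ α)}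

variable {p : ℕ}

lemma zmod2_cases (x : ZMod 2) : x = 0 ∨ x = 1 := by revert x; decide

lemma sgn_add (x y : ZMod 2) : sgn (x + y) = sgn x * sgn y := by
  rcases zmod2_cases x with hx | hx <;> rcases zmod2_cases y with hy | hy <;>
    subst hx <;> subst hy <;>
    simp only [add_zero, zero_add, show ((1:ZMod 2)+1) = 0 from by decide, sgn] <;>
    norm_num

lemma z2_add_self (x : Z2 p) : x + x = 0 := by
  funext i
  simp [Pi.add_apply]
  exact CharTwo.add_self_eq_zero _

lemma z2_eq_add_iff (a b c : Z2 p) : a = b + c ↔ b = a + c := by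
  constructor <;> rintro rfl <;> rw [add_assoc, z2_add_self, add_zero]

lemma z2_add_eq_zero_iff (a b : Z2 p) : a + b = 0 ↔ a = b := by
  constructor
  · intro h
    have := congrArg (· + b) h
    simpa [add_assoc, z2_add_self] using this
  · rintro rfl; exact z2_add_self a

lemma dotp_add_left (ζ η γ : Z2 p) : dotp (ζ + η) γ = dotp ζ γ + dotp η γ := by
  simp [dotp, add_mul, Finset.sum_add_distrib]

lemma dotp_add_right (ζ γ δ : Z2 p) : dotp ζ (γ + δ) = dotp ζ γ + dotp ζ δ := by
  simp [dotp, mul_add, Finset.sum_add_distrib]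

lemma nu_cast (ζ α : Z2 p) : ((nu ζ α : ZMod 2)) = dotp ζ α := by
  rw [nu, dotp, ← Finset.sum_boole]
  exact Finset.sum_congr rfl fun i _ => by
    rcases zmod2_cases (ζ i) with h | h <;> rcases zmod2_cases (α i) with h' | h' <;>
      simp [h, h']

lemma spinor_mul (ζ α η β : Z2 p) :
    Spinor ζ α * Spinor η β = sgn (dotp η α) • Spinor (ζ + η) (α + β) := by
  ext γ δ
  simp only [Matrix.mul_apply, Spinor, Matrix.of_apply, Matrix.smul_apply, smul_eq_mul]
  have h1 : ∀ μ : Z2 p, (γ = μ + α) ↔ (μ = γ + α) := fun μ => z2_eq_add_iff γ μ α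
  rw [Finset.sum_congr rfl (fun μ _ => by rw [if_congr (h1 μ) rfl rfl])]
  rw [Finset.sum_eq_single (γ + α)]
  · rw [if_pos rfl]
    have h2 : (γ + α = δ + β) ↔ (γ = δ + (α + β)) := by
      rw [eq_comm, z2_eq_add_iff, show δ + β + α = δ + (α + β) from by
        rw [add_assoc, add_comm β α]]
    by_cases h : γ + α = δ + β
    · rw [if_pos h, if_pos (h2.mp h), dotp_add_right, sgn_add, dotp_add_left, sgn_add]
      ring
    · rw [if_neg h, if_neg (fun hc => h (h2.mpr hc)), mul_zero, mul_zero]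
  · intro b _ hb; rw [if_neg hb, zero_mul]
  · intro hmem; exact absurd (Finset.mem_univ _) hmem

lemma I_pow_mod (n : ℕ) : Complex.I ^ n = Complex.I ^ (n % 4) := by
  conv_lhs => rw [← Nat.div_add_mod n 4]
  rw [pow_add, pow_mul, Complex.I_pow_four, one_pow, one_mul]

lemma I_pow_real (a b : ℕ) (h : a % 2 = b % 2) :
    ∃ t : ℝ, Complex.I ^ a = (t : ℂ) * Complex.I ^ b := by
  rw [I_pow_mod a, I_pow_mod b]
  have ha : a % 4 < 4 := Nat.mod_lt _ (by norm_num)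
  have hb : b % 4 < 4 := Nat.mod_lt _ (by norm_num)
  have h2 : a % 4 % 2 = b % 4 % 2 := by omega
  generalize a % 4 = x at ha h2 ⊢
  generalize b % 4 = y at hb h2 ⊢
  interval_cases x <;> interval_cases y <;>
    first
      | omega
      | (refine ⟨1, ?_⟩; norm_num [pow_succ, Complex.I_mul_I]; done)
      | (refine ⟨-1, ?_⟩; norm_num [pow_succ, Complex.I_mul_I]; done)

lemma neg_I_eq : (-Complex.I) = Complex.I ^ 3 := by
  rw [pow_succ, Complex.I_sq]; ring

lemma scalar_key (m k : ℕ) (hpar : (m + k) % 2 = 1) (s : ℝ) :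
    ∃ r : ℝ, Complex.I ^ 2 * (-Complex.I) ^ m * (s : ℂ) =
      (r : ℂ) * (Complex.I * (-Complex.I) ^ k) := by
  rw [neg_I_eq, ← pow_mul, ← pow_mul]
  obtain ⟨t, ht⟩ := I_pow_real (2 + 3 * m) (1 + 3 * k) (by omega)
  refine ⟨t * s, ?_⟩
  rw [show Complex.I ^ 2 * Complex.I ^ (3 * m) * (s : ℂ) =
      Complex.I ^ (2 + 3 * m) * s from by rw [pow_add], ht,
    show (1 : ℕ) + 3 * k = 1 + 3 * k from rfl, pow_add, pow_one]
  push_cast; ring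

noncomputable def Tg {p : ℕ} (ζ α : Z2 p) : Matrix (Z2 p) (Z2 p) ℂ :=
  Complex.I • ((-Complex.I) ^ nu ζ α • Spinor ζ α)

lemma Tg_mul (ζ α η β : Z2 p) :
    Tg ζ α * Tg η β =
      (Complex.I ^ 2 * (-Complex.I) ^ (nu ζ α + nu η β) * sgn (dotp η α)) •
        Spinor (ζ + η) (α + β) := by
  rw [Tg, Tg, Matrix.smul_mul, Matrix.smul_mul, Matrix.mul_smul, Matrix.mul_smul, spinor_mul]
  simp only [smul_smul]
  congr 1
  rw [pow_add]; ring

lemma comm_formula (ζ α η β : Z2 p) :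
    Tg ζ α * Tg η β - Tg η β * Tg ζ α =
      (Complex.I ^ 2 * (-Complex.I) ^ (nu ζ α + nu η β) *
        (sgn (dotp η α) - sgn (dotp ζ β))) • Spinor (ζ + η) (α + β) := by
  rw [Tg_mul, Tg_mul, show η + ζ = ζ + η from add_comm _ _,
    show β + α = α + β from add_comm _ _,
    show nu η β + nu ζ α = nu ζ α + nu η β from add_comm _ _, ← sub_smul]
  congr 1; ring

lemma natcast_mod_two_eq_one {n : ℕ} (h : (n : ZMod 2) = 1) : (n + 0) % 2 = 1 := by
  rcases Nat.mod_two_eq_zero_or_one n with h0 | h0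
  · rw [← ZMod.natCast_mod, h0] at h; exact absurd h (by decide)
  · omega

lemma comm_smul (ζ α η β : Z2 p) (hne : dotp η α ≠ dotp ζ β) :
    ∃ r : ℝ, Tg ζ α * Tg η β - Tg η β * Tg ζ α = r • Tg (ζ + η) (α + β) := by
  obtain ⟨s, hs⟩ : ∃ s : ℝ, sgn (dotp η α) - sgn (dotp ζ β) = (s : ℂ) := by
    rcases zmod2_cases (dotp η α) with h1 | h1 <;>
      rcases zmod2_cases (dotp ζ β) with h2 | h2
    · exact absurd (h1.trans h2.symm) hne
    · refine ⟨2, ?_⟩; rw [h1, h2]; norm_num [sgn]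
    · refine ⟨-2, ?_⟩; rw [h1, h2]; norm_num [sgn]
    · exact absurd (h1.trans h2.symm) hne
  have hpar : (nu ζ α + nu η β + nu (ζ + η) (α + β)) % 2 = 1 := by
    have hcast : ((nu ζ α + nu η β + nu (ζ + η) (α + β) : ℕ) : ZMod 2) = 1 := by
      push_cast [nu_cast]
      rw [dotp_add_left, dotp_add_right, dotp_add_right]
      rcases zmod2_cases (dotp η α) with h1 | h1 <;>
        rcases zmod2_cases (dotp ζ β) with h2 | h2 <;>
        rcases zmod2_cases (dotp ζ α) with h3 | h3 <;>
        rcases zmod2_cases (dotp η β) with h4 | h4 <;>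
        first
          | (exact absurd (h1.trans h2.symm) hne)
          | (rw [h1, h2, h3, h4]; decide)
    have := natcast_mod_two_eq_one hcast
    omega
  obtain ⟨r, hr⟩ := scalar_key (nu ζ α + nu η β) (nu (ζ + η) (α + β)) (by omega) s
  refine ⟨r, ?_⟩
  rw [comm_formula, hs, Tg, smul_smul, ← smul_assoc, hr, Complex.real_smul]

lemma comm_zero (ζ α η β : Z2 p) (h : dotp η α = dotp ζ β) :
    Tg ζ α * Tg η β - Tg η β * Tg ζ α = 0 := by
  rw [comm_formula, h]; simp

lemma gen_TT {ζ α η β : Z2 p} (h1 : dotp ζ α = 1) (h2 : dotp η β = 1) :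
    Tg ζ α * Tg η β - Tg η β * Tg ζ α ∈ frakT p := by
  by_cases h : dotp η α = dotp ζ β
  · rw [comm_zero ζ α η β h]; exact Submodule.zero_mem _
  · obtain ⟨r, hr⟩ := comm_smul ζ α η β h
    rw [hr]
    refine Submodule.smul_mem _ _ (Submodule.subset_span ⟨ζ + η, α + β, ?_, rfl⟩)
    rw [dotp_add_left, dotp_add_right, dotp_add_right, h1, h2]
    rcases zmod2_cases (dotp η α) with ha | ha <;>
      rcases zmod2_cases (dotp ζ β) with hb | hb <;>
      first
        | (exact absurd (ha.trans hb.symm) h)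
        | (rw [ha, hb]; decide)

lemma gen_TP {ζ α η β : Z2 p} (h1 : dotp ζ α = 1) (h2 : dotp η β = 0) :
    Tg ζ α * Tg η β - Tg η β * Tg ζ α ∈ frakP p := by
  by_cases h : dotp η α = dotp ζ β
  · rw [comm_zero ζ α η β h]; exact Submodule.zero_mem _
  · obtain ⟨r, hr⟩ := comm_smul ζ α η β h
    rw [hr]
    refine Submodule.smul_mem _ _ (Submodule.subset_span ⟨ζ + η, α + β, ?_, ?_, rfl⟩)
    · rw [dotp_add_left, dotp_add_right, dotp_add_right, h1, h2]
      rcases zmod2_cases (dotp η α) with ha | ha <;>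
        rcases zmod2_cases (dotp ζ β) with hb | hb <;>
        first
          | (exact absurd (ha.trans hb.symm) h)
          | (rw [ha, hb]; decide)
    · intro hc
      have hz : ζ + η = 0 := congrArg Prod.fst hc
      have ha : α + β = 0 := congrArg Prod.snd hc
      rw [z2_add_eq_zero_iff] at hz ha
      exact h (by rw [← hz, ← ha])

lemma gen_PP {ζ α η β : Z2 p} (h1 : dotp ζ α = 0) (h2 : dotp η β = 0) :
    Tg ζ α * Tg η β - Tg η β * Tg ζ α ∈ frakT p := by
  by_cases h : dotp η α = dotp ζ β
  · rw [comm_zero ζ α η β h]; exact Submodule.zero_mem _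
  · obtain ⟨r, hr⟩ := comm_smul ζ α η β h
    rw [hr]
    refine Submodule.smul_mem _ _ (Submodule.subset_span ⟨ζ + η, α + β, ?_, rfl⟩)
    rw [dotp_add_left, dotp_add_right, dotp_add_right, h1, h2]
    rcases zmod2_cases (dotp η α) with ha | ha <;>
      rcases zmod2_cases (dotp ζ β) with hb | hb <;>
      first
        | (exact absurd (ha.trans hb.symm) h)
        | (rw [ha, hb]; decide)

lemma trace_spinor {ζ α : Z2 p} (h : ¬(ζ = 0 ∧ α = 0)) : (Spinor ζ α).trace = 0 := by
  by_cases hα : α = 0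
  · have hζ : ζ ≠ 0 := fun hz => h ⟨hz, hα⟩
    obtain ⟨j, hj⟩ : ∃ j, ζ j ≠ 0 := by
      by_contra h'
      push_neg at h'
      exact hζ (funext fun i => h' i)
    have hj1 : ζ j = 1 := by rcases zmod2_cases (ζ j) with h' | h' <;> tauto
    subst hα
    rw [Matrix.trace]
    simp only [Matrix.diag, Spinor, Matrix.of_apply, add_zero, if_pos rfl]
    set δ : Z2 p := Pi.single j 1 with hδ
    have hdd : dotp ζ δ = 1 := by
      rw [dotp, Finset.sum_eq_single j]
      · rw [hδ, Pi.single_eq_same, mul_one, hj1]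
      · intro b _ hb; rw [hδ, Pi.single_eq_of_ne hb, mul_zero]
      · intro hj'; exact absurd (Finset.mem_univ _) hj'
    have key : ∑ γ, sgn (dotp ζ (γ + δ)) = ∑ γ, sgn (dotp ζ γ) :=
      Fintype.sum_equiv (Equiv.addRight δ) _ _ (fun γ => rfl)
    have flip : ∑ γ, sgn (dotp ζ (γ + δ)) = - ∑ γ, sgn (dotp ζ γ) := by
      rw [← Finset.sum_neg_distrib]
      refine Finset.sum_congr rfl fun γ _ => ?_
      rw [dotp_add_right, hdd, sgn_add]
      rcases zmod2_cases (dotp ζ γ) with h' | h' <;> rw [h'] <;> norm_num [sgn]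
    have : ∑ γ, sgn (dotp ζ γ) = 0 := by
      have h2 : (2 : ℂ) * ∑ γ, sgn (dotp ζ γ) = 0 := by
        have := key.symm.trans flip
        linear_combination this
      simpa using h2
    exact this
  · rw [Matrix.trace]
    simp only [Matrix.diag, Spinor, Matrix.of_apply, left_eq_add, hα, if_false]
    simp

lemma trace_gen_TP {ζ α η β : Z2 p} (h1 : dotp ζ α = 1) (h2 : dotp η β = 0) :
    (Tg ζ α * Tg η β).trace = 0 := by
  rw [Tg_mul, Matrix.trace_smul, trace_spinor, smul_zero]
  rintro ⟨ha, hb⟩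
  rw [z2_add_eq_zero_iff] at ha hb
  rw [ha, hb] at h1
  rw [h1] at h2
  exact absurd h2 (by decide)

noncomputable def brkt (p : ℕ) :
    Matrix (Z2 p) (Z2 p) ℂ →ₗ[ℝ] Matrix (Z2 p) (Z2 p) ℂ →ₗ[ℝ] Matrix (Z2 p) (Z2 p) ℂ :=
  LinearMap.mk₂ ℝ (fun X Y => X * Y - Y * X)
    (fun X X' Y => by simp only [add_mul, mul_add]; abel)
    (fun r X Y => by rw [Matrix.smul_mul, Matrix.mul_smul, smul_sub])
    (fun X Y Y' => by simp only [add_mul, mul_add]; abel)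
    (fun r X Y => by rw [Matrix.smul_mul, Matrix.mul_smul, smul_sub])

noncomputable def tform (p : ℕ) :
    Matrix (Z2 p) (Z2 p) ℂ →ₗ[ℝ] Matrix (Z2 p) (Z2 p) ℂ →ₗ[ℝ] ℂ :=
  LinearMap.mk₂ ℝ (fun X Y => (X * Y).trace)
    (fun X X' Y => by rw [add_mul, Matrix.trace_add])
    (fun r X Y => by rw [Matrix.smul_mul, Matrix.trace_smul])
    (fun X Y Y' => by rw [mul_add, Matrix.trace_add])
    (fun r X Y => by rw [Matrix.mul_smul, Matrix.trace_smul])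

lemma span_pair_mem {M N : Type*} [AddCommGroup M] [Module ℝ M] [AddCommGroup N] [Module ℝ N]
    (B : M →ₗ[ℝ] M →ₗ[ℝ] N) (s t : Set M) (U : Submodule ℝ N)
    (h : ∀ x ∈ s, ∀ y ∈ t, B x y ∈ U) :
    ∀ X ∈ Submodule.span ℝ s, ∀ Y ∈ Submodule.span ℝ t, B X Y ∈ U := by
  intro X hX
  induction hX using Submodule.span_induction with
  | mem x hx =>
    intro Y hY
    induction hY using Submodule.span_induction with
    | mem y hy => exact h x hx y hy
    | zero => simp only [map_zero]; exact U.zero_mem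
    | add y z _ _ hy hz => rw [map_add]; exact U.add_mem hy hz
    | smul a y _ hy => rw [_root_.map_smul]; exact U.smul_mem a hy
  | zero =>
    intro Y hY
    simp only [map_zero, LinearMap.zero_apply]
    exact U.zero_mem
  | add x y _ _ hx hy =>
    intro Y hY
    simp only [map_add, LinearMap.add_apply]
    exact U.add_mem (hx Y hY) (hy Y hY)
  | smul a x _ hx =>
    intro Y hY
    simp only [_root_.map_smul, LinearMap.smul_apply]
    exact U.smul_mem a (hx Y hY)


/-- Type-AI Cartan decomposition of `su(2^p)` from the rank-zero quotient algebra partition: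
`[𝔱,𝔱] ⊆ 𝔱`, `[𝔱,𝔭] ⊆ 𝔭`, `[𝔭,𝔭] ⊆ 𝔱` and `Tr(𝔱𝔭) = 0`. -/
theorem cartan_decomposition_AI {p : ℕ} (hp : 1 ≤ p) :
    (∀ X ∈ frakT p, ∀ Y ∈ frakT p, X * Y - Y * X ∈ frakT p) ∧
    (∀ X ∈ frakT p, ∀ Y ∈ frakP p, X * Y - Y * X ∈ frakP p) ∧
    (∀ X ∈ frakP p, ∀ Y ∈ frakP p, X * Y - Y * X ∈ frakT p) ∧
    (∀ X ∈ frakT p, ∀ Y ∈ frakP p, (X * Y).trace = 0) := by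
  refine ⟨?_, ?_, ?_, ?_⟩
  · intro X hX Y hY
    have := span_pair_mem (brkt p) _ _ (frakT p)
      (fun x hx y hy => by
        obtain ⟨ζ, α, h1, rfl⟩ := hx
        obtain ⟨η, β, h2, rfl⟩ := hy
        exact gen_TT h1 h2) X hX Y hY
    simpa [brkt] using this
  · intro X hX Y hY
    have := span_pair_mem (brkt p) _ _ (frakP p)
      (fun x hx y hy => by
        obtain ⟨ζ, α, h1, rfl⟩ := hx
        obtain ⟨η, β, h2, _, rfl⟩ := hy
        exact gen_TP h1 h2) X hX Y hY
    simpa [brkt] using this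
  · intro X hX Y hY
    have := span_pair_mem (brkt p) _ _ (frakT p)
      (fun x hx y hy => by
        obtain ⟨ζ, α, h1, _, rfl⟩ := hx
        obtain ⟨η, β, h2, _, rfl⟩ := hy
        exact gen_PP h1 h2) X hX Y hY
    simpa [brkt] using this
  · intro X hX Y hY
    have := span_pair_mem (tform p) _ _ (⊥ : Submodule ℝ ℂ)
      (fun x hx y hy => by
        obtain ⟨ζ, α, h1, rfl⟩ := hx
        obtain ⟨η, β, h2, _, rfl⟩ := hy
        simp only [tform, LinearMap.mk₂_apply, Submodule.mem_bot]
        exact trace_gen_TP h1 h2) X hX Y hY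
    simpa [tform] using this
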